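/- Let x₁, …, x_N be as in the periodic setting, solving the Euler–Lagrange system with zero potential gradient, and assume r ↦ G'(r) r² is nondecreasing on (0, ∞). Then for every p ∈ [1, ∞) and every t ∈ [0, T], Σ_{i=1}^{N} (Rᵢ(t))^p (xᵢ(t) − x_{i−1}(t)) ≤ max{ Σ_{i=1}^{N} (Rᵢ(0))^p (xᵢ(0) − x_{i−1}(0)), Σ_{i=1}^{N} (Rᵢ(T))^p (xᵢ(T) − x_{i−1}(T)) }; that is, the L^p-norm of the discrete particle density at any time is controlled by its values at the initial and terminal times, uniformly in t. -/

import Mathlib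

open Set Finset

lemma sum_shift_per (M : ℤ) (hM : 1 ≤ M) (F : ℤ → ℝ) (hF : F 0 = F M) :
    ∑ i ∈ Finset.Icc (1:ℤ) M, F (i - 1) = ∑ i ∈ Finset.Icc (1:ℤ) M, F i := by
  have hmap : Finset.Icc (1:ℤ) M = (Finset.Icc (0:ℤ) (M-1)).map (addRightEmbedding 1) := by
    rw [Finset.map_add_right_Icc]; norm_num
  have hA : ∑ i ∈ Finset.Icc (1:ℤ) M, F (i-1) = ∑ j ∈ Finset.Icc (0:ℤ) (M-1), F j := by
    rw [hmap, Finset.sum_map]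
    refine Finset.sum_congr rfl fun j _ => ?_
    simp [addRightEmbedding]
  rw [hA]
  have h0 : Finset.Icc (0:ℤ) (M-1) = insert 0 (Finset.Icc 1 (M-1)) := by
    ext j; simp [Finset.mem_Icc]; omega
  have h2 : Finset.Icc (1:ℤ) M = insert M (Finset.Icc 1 (M-1)) := by
    ext j; simp [Finset.mem_Icc]; omega
  rw [h0, h2, Finset.sum_insert (by simp), Finset.sum_insert (by simp [Finset.mem_Icc]), hF]

lemma abel_per (M : ℤ) (hM : 1 ≤ M) (g a : ℤ → ℝ) (hg : g (M+1) = g 1) (ha : a 0 = a M) :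
    ∑ i ∈ Finset.Icc (1:ℤ) M, g i * (a i - a (i-1)) =
    ∑ i ∈ Finset.Icc (1:ℤ) M, (g i - g (i+1)) * a i := by
  have key : ∑ i ∈ Finset.Icc (1:ℤ) M, g i * a (i-1)
      = ∑ i ∈ Finset.Icc (1:ℤ) M, g (i+1) * a i := by
    have h1 : ∑ i ∈ Finset.Icc (1:ℤ) M, g i * a (i-1)
        = ∑ i ∈ Finset.Icc (1:ℤ) M, (fun j => g (j+1) * a j) (i-1) := by
      refine Finset.sum_congr rfl fun i _ => ?_
      simp
    rw [h1]
    exact sum_shift_per M hM (fun j => g (j+1) * a j) (by simp [hg, ha])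
  calc ∑ i ∈ Finset.Icc (1:ℤ) M, g i * (a i - a (i-1))
      = ∑ i ∈ Finset.Icc (1:ℤ) M, (g i * a i - g i * a (i-1)) := by
        refine Finset.sum_congr rfl fun i _ => by ring
    _ = ∑ i ∈ Finset.Icc (1:ℤ) M, g i * a i - ∑ i ∈ Finset.Icc (1:ℤ) M, g i * a (i-1) :=
        Finset.sum_sub_distrib _ _
    _ = ∑ i ∈ Finset.Icc (1:ℤ) M, g i * a i - ∑ i ∈ Finset.Icc (1:ℤ) M, g (i+1) * a i := by
        rw [key]
    _ = ∑ i ∈ Finset.Icc (1:ℤ) M, (g i - g (i+1)) * a i := by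
        rw [← Finset.sum_sub_distrib]
        exact Finset.sum_congr rfl fun i _ => by ring

/-- Discrete density `Rᵢ(t) = δ/(xᵢ(t) − x_{i−1}(t))`, `δ = 1/N`, periodic indexing by `ℤ`. -/
noncomputable def Rd (N : ℕ) (x : ℤ → ℝ → ℝ) (i : ℤ) (t : ℝ) : ℝ :=
  ((1 : ℝ) / N) / (x i t - x (i - 1) t)

set_option maxHeartbeats 1000000 in
/-- Uniform-in-time `L^p` bound for the discrete particle density: along solutions of the
periodic Euler–Lagrange system with zero potential gradient, for every `p ∈ [1,∞)` the
quantity `Σᵢ Rᵢ(t)^p (xᵢ(t) − x_{i−1}(t))` is controlled by its initial and terminal values. -/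
theorem stmt_14
    (N : ℕ) (hN : 2 ≤ N) (T : ℝ) (hT : 0 < T)
    (x : ℤ → ℝ → ℝ)
    (hper : ∀ i t, x (i + N) t = x i t + 1)
    (hx : ∀ i, ContDiff ℝ 2 (x i))
    (hord : ∀ i, ∀ t ∈ Icc (0:ℝ) T, x i t < x (i + 1) t)
    (L : ℝ → ℝ) (hL : ContDiff ℝ 2 L)
    (hL'' : ∀ u, 0 < deriv (deriv L) u)
    (G : ℝ → ℝ) (hG : ContDiffOn ℝ 1 G (Ioi 0))
    (hB : MonotoneOn (fun r => deriv G r * r ^ 2) (Ioi 0))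
    (hEL : ∀ i, ∀ t ∈ Icc (0:ℝ) T,
      deriv (deriv L) (deriv (x i) t) * deriv (deriv (x i)) t =
        N * (deriv G (Rd N x (i + 1) t) * (Rd N x (i + 1) t) ^ 2
          - deriv G (Rd N x i t) * (Rd N x i t) ^ 2)) :
    ∀ p : ℝ, 1 ≤ p → ∀ t ∈ Icc (0:ℝ) T,
      ∑ i ∈ Finset.Icc (1:ℤ) (N:ℤ), (Rd N x i t) ^ p * (x i t - x (i - 1) t) ≤
        max (∑ i ∈ Finset.Icc (1:ℤ) (N:ℤ), (Rd N x i 0) ^ p * (x i 0 - x (i - 1) 0))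
          (∑ i ∈ Finset.Icc (1:ℤ) (N:ℤ), (Rd N x i T) ^ p * (x i T - x (i - 1) T)) := by
  intro p hp t ht
  have hN0 : (0:ℝ) < (N:ℝ) := by
    have : 0 < N := lt_of_lt_of_le (by norm_num) hN
    exact_mod_cast this
  have hdd : (0:ℝ) < 1/(N:ℝ) := by positivity
  -- positivity of gaps
  have hΔpos : ∀ (i : ℤ), ∀ s ∈ Icc (0:ℝ) T, 0 < x i s - x (i-1) s := by
    intro i s hs
    have h := hord (i-1) s hs
    rw [sub_add_cancel] at h
    exact sub_pos.mpr h
  -- differentiability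
  have hxd : ∀ i, Differentiable ℝ (x i) := fun i => (hx i).differentiable (by norm_num)
  have hx2 : ∀ i, Differentiable ℝ (deriv (x i)) := by
    intro i
    have h : ContDiff ℝ ((1:WithTop ℕ∞) + 1) (x i) := by
      rw [one_add_one_eq_two]; exact hx i
    exact ((contDiff_succ_iff_deriv.mp h).2.2).differentiable (by norm_num)
  -- periodicity of derivatives
  have hvper : ∀ i : ℤ, deriv (x (i + N)) = deriv (x i) := by
    intro i
    have hfun : x (i + N) = fun u => x i u + 1 := funext (hper i)
    rw [hfun]; funext u; exact deriv_add_const 1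
  have haper : deriv (deriv (x (N:ℤ))) = deriv (deriv (x 0)) := by
    have h := hvper 0; rw [zero_add] at h; rw [h]
  -- gap derivatives
  have hΔder : ∀ (i : ℤ) (s : ℝ), HasDerivAt (fun u => x i u - x (i-1) u)
      (deriv (x i) s - deriv (x (i-1)) s) s :=
    fun i s => ((hxd i s).hasDerivAt).sub ((hxd (i-1) s).hasDerivAt)
  -- convexity of the energy
  have hconv : ConvexOn ℝ (Icc (0:ℝ) T)
      (fun s => ∑ i ∈ Finset.Icc (1:ℤ) (N:ℤ), (x i s - x (i-1) s) ^ (1-p)) := by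
    refine convexOn_of_hasDerivWithinAt2_nonneg (convex_Icc 0 T)
      (f' := fun s => ∑ i ∈ Finset.Icc (1:ℤ) (N:ℤ),
        (deriv (x i) s - deriv (x (i-1)) s) * (1-p) * (x i s - x (i-1) s) ^ (1-p-1))
      (f'' := fun s => ∑ i ∈ Finset.Icc (1:ℤ) (N:ℤ),
        ((deriv (deriv (x i)) s - deriv (deriv (x (i-1))) s) * (1-p)
            * (x i s - x (i-1) s) ^ (1-p-1)
          + (deriv (x i) s - deriv (x (i-1)) s) * (1-p)
            * ((deriv (x i) s - deriv (x (i-1)) s) * (1-p-1)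
              * (x i s - x (i-1) s) ^ (1-p-1-1))))
      ?_ ?_ ?_ ?_
    · -- continuity
      apply continuousOn_finset_sum
      intro i _
      exact (((hxd i).continuous.sub (hxd (i-1)).continuous).continuousOn).rpow_const
        (fun s hs => Or.inl (hΔpos i s hs).ne')
    · -- first derivative
      intro s hsi
      have hs : s ∈ Icc (0:ℝ) T := interior_subset hsi
      exact (HasDerivAt.fun_sum fun i _ =>
        (hΔder i s).rpow_const (Or.inl (hΔpos i s hs).ne')).hasDerivWithinAt
    · -- second derivative
      intro s hsi
      have hs : s ∈ Icc (0:ℝ) T := interior_subset hsi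
      refine (HasDerivAt.fun_sum fun i _ => ?_).hasDerivWithinAt
      exact ((((hx2 i s).hasDerivAt).sub ((hx2 (i-1) s).hasDerivAt)).mul_const (1-p)).mul
        ((hΔder i s).rpow_const (Or.inl (hΔpos i s hs).ne'))
    · -- nonnegativity of the second derivative
      intro s hsi
      have hs : s ∈ Icc (0:ℝ) T := interior_subset hsi
      beta_reduce
      rw [Finset.sum_add_distrib]
      have hsq : 0 ≤ ∑ i ∈ Finset.Icc (1:ℤ) (N:ℤ),
          (deriv (x i) s - deriv (x (i-1)) s) * (1-p)
            * ((deriv (x i) s - deriv (x (i-1)) s) * (1-p-1)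
              * (x i s - x (i-1) s) ^ (1-p-1-1)) := by
        refine Finset.sum_nonneg fun i _ => ?_
        have h1 : 0 ≤ (1-p) * (1-p-1) := by nlinarith
        have h2 : 0 < (x i s - x (i-1) s) ^ (1-p-1-1) :=
          Real.rpow_pos_of_pos (hΔpos i s hs) _
        nlinarith [mul_nonneg (mul_nonneg h1 (sq_nonneg (deriv (x i) s - deriv (x (i-1)) s))) h2.le]
      have habel : ∑ i ∈ Finset.Icc (1:ℤ) (N:ℤ),
          (deriv (deriv (x i)) s - deriv (deriv (x (i-1))) s) * (1-p)
            * (x i s - x (i-1) s) ^ (1-p-1)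
          = ∑ i ∈ Finset.Icc (1:ℤ) (N:ℤ),
            ((fun j => (1-p) * (x j s - x (j-1) s) ^ (1-p-1)) i
              - (fun j => (1-p) * (x j s - x (j-1) s) ^ (1-p-1)) (i+1))
              * (fun j => deriv (deriv (x j)) s) i := by
        rw [← abel_per (N:ℤ) (by exact_mod_cast hN.trans' (by norm_num))
          (fun j => (1-p) * (x j s - x (j-1) s) ^ (1-p-1))
          (fun j => deriv (deriv (x j)) s) ?_ ?_]
        · exact Finset.sum_congr rfl fun i _ => by ring
        · -- g (N+1) = g 1
          have e1 : x ((N:ℤ)+1) s = x 1 s + 1 := by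
            have h := hper 1 s; rw [show (1:ℤ)+(N:ℤ) = (N:ℤ)+1 by ring] at h; exact h
          have e2 : x ((N:ℤ)) s = x 0 s + 1 := by
            have h := hper 0 s; rw [zero_add] at h; exact h
          rw [show ((N:ℤ)+1-1) = (N:ℤ) by ring, show ((1:ℤ)-1) = 0 by ring, e1, e2]
          rw [show x 1 s + 1 - (x 0 s + 1) = x 1 s - x 0 s by ring]
        · -- a 0 = a N
          rw [haper]
      have hsgn : 0 ≤ ∑ i ∈ Finset.Icc (1:ℤ) (N:ℤ),
          (deriv (deriv (x i)) s - deriv (deriv (x (i-1))) s) * (1-p)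
            * (x i s - x (i-1) s) ^ (1-p-1) := by
        rw [habel]
        refine Finset.sum_nonneg fun i _ => ?_
        simp only [add_sub_cancel_right]
        have hΔ1 : 0 < x i s - x (i-1) s := hΔpos i s hs
        have hΔ2 : 0 < x (i+1) s - x i s := by
          have h := hΔpos (i+1) s hs
          rwa [add_sub_cancel_right] at h
        have hR1 : Rd N x i s = (1/(N:ℝ)) / (x i s - x (i-1) s) := rfl
        have hR2 : Rd N x (i+1) s = (1/(N:ℝ)) / (x (i+1) s - x i s) := by
          rw [Rd, add_sub_cancel_right]
        have hR1pos : 0 < Rd N x i s := by rw [hR1]; positivity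
        have hR2pos : 0 < Rd N x (i+1) s := by rw [hR2]; positivity
        have hEL' := hEL i s hs
        rcases le_total (x i s - x (i-1) s) (x (i+1) s - x i s) with hle | hle
        · -- R₂ ≤ R₁, so a i ≤ 0 and the g-difference is ≤ 0
          have hRle : Rd N x (i+1) s ≤ Rd N x i s := by
            rw [hR1, hR2]
            exact div_le_div_of_nonneg_left hdd.le hΔ1 hle
          have hBle : deriv G (Rd N x (i+1) s) * (Rd N x (i+1) s) ^ 2
              ≤ deriv G (Rd N x i s) * (Rd N x i s) ^ 2 :=
            hB (mem_Ioi.mpr hR2pos) (mem_Ioi.mpr hR1pos) hRle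
          have hai : deriv (deriv (x i)) s ≤ 0 := by
            nlinarith [hL'' (deriv (x i) s),
              mul_nonneg hN0.le (sub_nonneg.mpr hBle)]
          have hpow : (x (i+1) s - x i s) ^ (1-p-1) ≤ (x i s - x (i-1) s) ^ (1-p-1) :=
            Real.rpow_le_rpow_of_nonpos hΔ1 hle (by linarith)
          have hfac : (1-p) * (x i s - x (i-1) s) ^ (1-p-1)
              - (1-p) * (x (i+1) s - x i s) ^ (1-p-1) ≤ 0 := by nlinarith
          nlinarith [mul_nonneg (neg_nonneg.mpr hfac) (neg_nonneg.mpr hai)]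
        · -- R₁ ≤ R₂, so a i ≥ 0 and the g-difference is ≥ 0
          have hRle : Rd N x i s ≤ Rd N x (i+1) s := by
            rw [hR1, hR2]
            exact div_le_div_of_nonneg_left hdd.le hΔ2 hle
          have hBle : deriv G (Rd N x i s) * (Rd N x i s) ^ 2
              ≤ deriv G (Rd N x (i+1) s) * (Rd N x (i+1) s) ^ 2 :=
            hB (mem_Ioi.mpr hR1pos) (mem_Ioi.mpr hR2pos) hRle
          have hai : 0 ≤ deriv (deriv (x i)) s := by
            nlinarith [hL'' (deriv (x i) s),
              mul_nonneg hN0.le (sub_nonneg.mpr hBle)]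
          have hpow : (x i s - x (i-1) s) ^ (1-p-1) ≤ (x (i+1) s - x i s) ^ (1-p-1) :=
            Real.rpow_le_rpow_of_nonpos hΔ2 hle (by linarith)
          have hfac : 0 ≤ (1-p) * (x i s - x (i-1) s) ^ (1-p-1)
              - (1-p) * (x (i+1) s - x i s) ^ (1-p-1) := by nlinarith
          exact mul_nonneg hfac hai
      exact add_nonneg hsgn hsq
  -- conversion of the statement's sums
  have key : ∀ (Δ : ℝ), 0 < Δ → ((1/(N:ℝ))/Δ)^p * Δ = (1/(N:ℝ))^p * Δ^(1-p) := by
    intro Δ hΔ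
    rw [Real.div_rpow (by positivity) hΔ.le, Real.rpow_sub hΔ, Real.rpow_one]
    have hne : (Δ:ℝ)^p ≠ 0 := (Real.rpow_pos_of_pos hΔ p).ne'
    field_simp
  have hsum : ∀ s ∈ Icc (0:ℝ) T,
      (∑ i ∈ Finset.Icc (1:ℤ) (N:ℤ), (Rd N x i s)^p * (x i s - x (i-1) s))
        = (1/(N:ℝ))^p * ∑ i ∈ Finset.Icc (1:ℤ) (N:ℤ), (x i s - x (i-1) s)^(1-p) := by
    intro s hs
    rw [Finset.mul_sum]
    refine Finset.sum_congr rfl fun i _ => ?_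
    rw [Rd]
    exact key _ (hΔpos i s hs)
  have h0m : (0:ℝ) ∈ Icc (0:ℝ) T := left_mem_Icc.mpr hT.le
  have hTm : T ∈ Icc (0:ℝ) T := right_mem_Icc.mpr hT.le
  rw [hsum t ht, hsum 0 h0m, hsum T hTm]
  have hmax := hconv.le_on_segment (z := t) h0m hTm (by rwa [segment_eq_Icc hT.le])
  have hδp : 0 ≤ (1/(N:ℝ))^p := Real.rpow_nonneg (by positivity) p
  exact le_trans (mul_le_mul_of_nonneg_left hmax hδp)
    (le_of_eq (mul_max_of_nonneg _ _ hδp))
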